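/- For every tree T on ℕ, the collection M_T = { ν̃ : ν ∈ T ∪ [T] or |ν| ≤ 3 } is a compact subset of 2^ℕ (identifying subsets of ℕ with their indicator sequences), and M_T contains an infinite set if and only if T is ill-founded. -/
import Mathlib


/-- A tree on `ℕ⁺` (positive naturals): a set of finite sequences closed under initial
segments. -/
def IsTree (T : Set (List ℕ+)) : Prop :=
  ∀ l ∈ T, ∀ l' : List ℕ+, l' <+: l → l' ∈ T

/-- The infinite branches `[T]` of a tree `T`. -/
def branches (T : Set (List ℕ+)) : Set (ℕ → ℕ+) :=
  {σ | ∀ k : ℕ, (List.ofFn fun i : Fin k => σ i) ∈ T}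

/-- `ν̃` for a finite sequence `ν = (n₁, …, nₖ)`: the set `{n₁, n₁+n₂, …, n₁+⋯+nₖ}` of its
partial sums. -/
def partialSums (ν : List ℕ+) : Set ℕ :=
  {s | ∃ k < ν.length, s = ((ν.take (k + 1)).map (fun p : ℕ+ => (p : ℕ))).sum}

/-- `ν̃` for an infinite sequence `ν = (n₁, n₂, …)`: the set `{n₁, n₁+n₂, …}`. -/
def partialSumsInf (ν : ℕ → ℕ+) : Set ℕ :=
  {s | ∃ k : ℕ, s = ∑ i ∈ Finset.range (k + 1), (ν i : ℕ)}

/-- Indicator function of a set of naturals, as an element of the Cantor space. -/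
noncomputable def setToBool (A : Set ℕ) : ℕ → Bool := fun n => decide (n ∈ A) (h := Classical.dec _)

/-- `M_T = { ν̃ : ν ∈ T ∪ [T] or |ν| ≤ 3 }`, as a collection of subsets of `ℕ` coded as
elements of Cantor space. -/
noncomputable def MT (T : Set (List ℕ+)) : Set (ℕ → Bool) :=
  (fun ν : List ℕ+ => setToBool (partialSums ν)) '' {ν | ν ∈ T ∨ ν.length ≤ 3} ∪
  (fun ν : ℕ → ℕ+ => setToBool (partialSumsInf ν)) '' branches T
lemma setToBool_eq_true {A : Set ℕ} {n : ℕ} : setToBool A n = true ↔ n ∈ A := by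
  simp [setToBool]

def sumTo (ν : List ℕ+) (k : ℕ) : ℕ := ((ν.map (fun p : ℕ+ => (p : ℕ))).take k).sum

lemma mem_partialSums {ν : List ℕ+} {s : ℕ} :
    s ∈ partialSums ν ↔ ∃ k < ν.length, s = sumTo ν (k + 1) := by
  simp only [partialSums, sumTo, Set.mem_setOf_eq, List.map_take]

lemma sumTo_succ (ν : List ℕ+) {k : ℕ} (hk : k < ν.length) :
    sumTo ν (k + 1) = sumTo ν k + (ν.get ⟨k, hk⟩ : ℕ) := by
  unfold sumTo
  rw [List.sum_take_succ _ k (by simpa using hk)]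
  simp

lemma sumTo_mono (ν : List ℕ+) : Monotone (sumTo ν) := by
  intro k k' h
  unfold sumTo
  have hpre : (ν.map (fun p : ℕ+ => (p : ℕ))).take k <+: (ν.map (fun p : ℕ+ => (p : ℕ))).take k' := by
    have := List.take_prefix k ((ν.map (fun p : ℕ+ => (p : ℕ))).take k')
    rwa [List.take_take, min_eq_left h] at this
  obtain ⟨t, ht⟩ := hpre
  simp only [← ht, List.sum_append]
  omega

lemma sumTo_lt (ν : List ℕ+) {k k' : ℕ} (h : k < k') (h2 : k' ≤ ν.length) :
    sumTo ν k < sumTo ν k' := by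
  have h1 : sumTo ν k < sumTo ν (k + 1) := by
    rw [sumTo_succ ν (lt_of_lt_of_le h h2)]
    have := (ν.get ⟨k, lt_of_lt_of_le h h2⟩).pos
    omega
  exact lt_of_lt_of_le h1 (sumTo_mono ν h)

lemma partialSums_pos {ν : List ℕ+} {s : ℕ} (hs : s ∈ partialSums ν) : 1 ≤ s := by
  obtain ⟨k, hk, rfl⟩ := mem_partialSums.1 hs
  have h0 : sumTo ν 0 = 0 := by simp [sumTo]
  have := sumTo_lt ν (show 0 < k + 1 by omega) hk
  omega

lemma sumTo_take (ν : List ℕ+) (m k : ℕ) (h : k ≤ m) : sumTo (ν.take m) k = sumTo ν k := by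
  unfold sumTo
  rw [← List.map_take, List.take_take, min_eq_left h, List.map_take]

lemma mem_partialSums_cons {a : ℕ+} {l : List ℕ+} {s : ℕ} :
    s ∈ partialSums (a :: l) ↔ s = (a : ℕ) ∨ ∃ t ∈ partialSums l, s = (a : ℕ) + t := by
  have hcons : ∀ k : ℕ, sumTo (a :: l) (k + 1) = (a : ℕ) + sumTo l k := by
    intro k
    unfold sumTo
    simp [List.take_succ_cons]
  constructor
  · intro hs
    obtain ⟨k, hk, rfl⟩ := mem_partialSums.1 hs
    rcases k with _ | j
    · left; simp [hcons, sumTo]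
    · right
      exact ⟨sumTo l (j + 1), mem_partialSums.2 ⟨j, by simpa using hk, rfl⟩, (hcons (j + 1))⟩
  · rintro (rfl | ⟨t, ht, rfl⟩)
    · refine mem_partialSums.2 ⟨0, by simp, ?_⟩
      rw [hcons 0]
      simp [sumTo]
    · obtain ⟨j, hj, rfl⟩ := mem_partialSums.1 ht
      exact mem_partialSums.2 ⟨j + 1, by simpa using hj, (hcons (j + 1)).symm⟩

lemma partialSums_injective : ∀ ν₁ ν₂ : List ℕ+, partialSums ν₁ = partialSums ν₂ → ν₁ = ν₂ := by
  intro ν₁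
  induction ν₁ with
  | nil =>
    intro ν₂ h
    rcases ν₂ with _ | ⟨b, m⟩
    · rfl
    · exfalso
      have hb : (b : ℕ) ∈ partialSums (b :: m) := mem_partialSums_cons.2 (Or.inl rfl)
      rw [← h] at hb
      obtain ⟨k, hk, _⟩ := hb
      simp at hk
  | cons a l ih =>
    intro ν₂ h
    rcases ν₂ with _ | ⟨b, m⟩
    · exfalso
      have hb : (a : ℕ) ∈ partialSums (a :: l) := mem_partialSums_cons.2 (Or.inl rfl)
      rw [h] at hb
      obtain ⟨k, hk, _⟩ := hb
      simp at hk
    · have hab : (a : ℕ) = (b : ℕ) := by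
        have ha : (a : ℕ) ∈ partialSums (b :: m) := by
          rw [← h]; exact mem_partialSums_cons.2 (Or.inl rfl)
        have hb : (b : ℕ) ∈ partialSums (a :: l) := by
          rw [h]; exact mem_partialSums_cons.2 (Or.inl rfl)
        rcases mem_partialSums_cons.1 ha with h1 | ⟨t, ht, h1⟩
        · exact h1
        · rcases mem_partialSums_cons.1 hb with h2 | ⟨u, hu, h2⟩
          · exact h2.symm
          · exfalso
            have := partialSums_pos ht
            have := partialSums_pos hu
            omega
      have hab' : a = b := PNat.coe_injective hab
      subst hab'
      have hlm : partialSums l = partialSums m := by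
        ext t
        constructor
        · intro htl
          have : (a : ℕ) + t ∈ partialSums (a :: m) := by
            rw [← h]; exact mem_partialSums_cons.2 (Or.inr ⟨t, htl, rfl⟩)
          rcases mem_partialSums_cons.1 this with h1 | ⟨u, hu, h1⟩
          · have := partialSums_pos htl; omega
          · have : t = u := by omega
            rwa [this]
        · intro htm
          have : (a : ℕ) + t ∈ partialSums (a :: l) := by
            rw [h]; exact mem_partialSums_cons.2 (Or.inr ⟨t, htm, rfl⟩)
          rcases mem_partialSums_cons.1 this with h1 | ⟨u, hu, h1⟩
          · have := partialSums_pos htm; omega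
          · have : t = u := by omega
            rwa [this]
      rw [ih m hlm]

open Classical in
lemma exists_take_partialSums (w : List ℕ+) (N : ℕ) :
    ∃ m ≤ w.length, partialSums (w.take m) = {s | s ≤ N ∧ s ∈ partialSums w} := by
  classical
  set P : ℕ → Prop := fun j => sumTo w j ≤ N with hP
  set m := Nat.findGreatest P w.length with hm
  have hmle : m ≤ w.length := Nat.findGreatest_le _
  have hPm : P m := Nat.findGreatest_spec (Nat.zero_le _) (by simp [hP, sumTo])
  refine ⟨m, hmle, ?_⟩
  have hlen : (w.take m).length = m := by simp [min_eq_left hmle]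
  ext s
  simp only [Set.mem_setOf_eq]
  constructor
  · intro hs
    obtain ⟨k, hk, rfl⟩ := mem_partialSums.1 hs
    rw [hlen] at hk
    rw [sumTo_take w m (k + 1) hk]
    have h1 : sumTo w (k + 1) ≤ sumTo w m := sumTo_mono w hk
    exact ⟨le_trans h1 hPm, mem_partialSums.2 ⟨k, lt_of_lt_of_le hk hmle, rfl⟩⟩
  · rintro ⟨hsN, hs⟩
    obtain ⟨k, hk, rfl⟩ := mem_partialSums.1 hs
    have hkm : k + 1 ≤ m := Nat.le_findGreatest hk hsN
    exact mem_partialSums.2 ⟨k, by omega, (sumTo_take w m (k + 1) hkm).symm⟩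

lemma sumTo_ofFn (σ : ℕ → ℕ+) {n k : ℕ} (hk : k ≤ n) :
    sumTo (List.ofFn fun i : Fin n => σ i) k = ∑ i ∈ Finset.range k, (σ i : ℕ) := by
  induction k with
  | zero => simp [sumTo]
  | succ j ih =>
    have hj : j < (List.ofFn fun i : Fin n => σ i).length := by simp; omega
    rw [sumTo_succ _ hj, ih (by omega), Finset.sum_range_succ]
    congr 1
    simp [List.get_ofFn]

lemma take_ofFn_eq {σ : ℕ → ℕ+} {k K : ℕ} (h : k ≤ K) :
    (List.ofFn fun i : Fin K => σ i).take k = List.ofFn fun i : Fin k => σ i := by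
  apply List.ext_getElem
  · simp; omega
  · intro i h1 h2
    simp only [List.getElem_take, List.getElem_ofFn]

lemma mem_partialSumsInf_le {σ : ℕ → ℕ+} {s N : ℕ} :
    (s ≤ N ∧ s ∈ partialSumsInf σ) ↔
      (s ≤ N ∧ s ∈ partialSums (List.ofFn fun i : Fin (N + 1) => σ i)) := by
  have hsum : ∀ k : ℕ, k + 1 ≤ N + 1 →
      sumTo (List.ofFn fun i : Fin (N + 1) => σ i) (k + 1) = ∑ i ∈ Finset.range (k + 1), (σ i : ℕ) := by
    intro k hk
    rw [sumTo_ofFn σ hk]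
  have hbig : ∀ k : ℕ, k + 1 ≤ ∑ i ∈ Finset.range (k + 1), (σ i : ℕ) := by
    intro k
    calc k + 1 = ∑ _i ∈ Finset.range (k + 1), 1 := by simp
    _ ≤ ∑ i ∈ Finset.range (k + 1), (σ i : ℕ) :=
        Finset.sum_le_sum fun i _ => (σ i).one_le
  constructor
  · rintro ⟨hsN, k, rfl⟩
    refine ⟨hsN, mem_partialSums.2 ⟨k, ?_, ?_⟩⟩
    · have := hbig k; simp only [List.length_ofFn]; omega
    · rw [hsum k (by have := hbig k; omega)]
  · rintro ⟨hsN, hs⟩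
    obtain ⟨k, hk, rfl⟩ := mem_partialSums.1 hs
    simp only [List.length_ofFn] at hk
    rw [hsum k (by omega)]
    exact ⟨by rw [← hsum k (by omega)]; exact hsN, k, rfl⟩

lemma key_lemma {T : Set (List ℕ+)} (hT : IsTree T) {B : ℕ → Bool} (hB : B ∈ MT T) (N : ℕ) :
    ∃ ν : List ℕ+, (ν ∈ T ∨ ν.length ≤ 3) ∧ partialSums ν = {s | s ≤ N ∧ B s = true} := by
  rcases hB with ⟨w, hw, rfl⟩ | ⟨σ, hσ, rfl⟩
  · obtain ⟨m, hm, hsums⟩ := exists_take_partialSums w N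
    refine ⟨w.take m, ?_, ?_⟩
    · rcases hw with hw | hw
      · exact Or.inl (hT w hw _ (List.take_prefix m w))
      · exact Or.inr (le_trans (by simp) hw)
    · rw [hsums]
      ext s
      simp only [Set.mem_setOf_eq, setToBool_eq_true]
  · set w : List ℕ+ := List.ofFn fun i : Fin (N + 1) => σ i with hwdef
    obtain ⟨m, hm, hsums⟩ := exists_take_partialSums w N
    refine ⟨w.take m, Or.inl (hT w (hσ (N + 1)) _ (List.take_prefix m w)), ?_⟩
    rw [hsums]
    ext s
    simp only [Set.mem_setOf_eq, setToBool_eq_true]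
    exact (mem_partialSumsInf_le (σ := σ) (s := s) (N := N)).symm

lemma MT_zero {T : Set (List ℕ+)} {B : ℕ → Bool} (hB : B ∈ MT T) : B 0 = false := by
  rcases hB with ⟨w, _, rfl⟩ | ⟨σ, _, rfl⟩
  · rw [Bool.eq_false_iff]
    intro h
    exact absurd (partialSums_pos (setToBool_eq_true.1 h)) (by omega)
  · rw [Bool.eq_false_iff]
    intro h
    obtain ⟨k, hk⟩ := setToBool_eq_true.1 h
    have : k + 1 ≤ ∑ i ∈ Finset.range (k + 1), (σ i : ℕ) := by
      calc k + 1 = ∑ _i ∈ Finset.range (k + 1), 1 := by simp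
      _ ≤ _ := Finset.sum_le_sum fun i _ => (σ i).one_le
    omega

lemma bool_ext {a b : Bool} (h : a = true ↔ b = true) : a = b := by
  cases a <;> cases b <;> simp_all

lemma MT_isClosed (T : Set (List ℕ+)) (hT : IsTree T) : IsClosed (MT T) := by
  classical
  refine isClosed_of_closure_subset fun A hA => ?_
  have happrox : ∀ N, ∃ B ∈ MT T, ∀ n ≤ N, B n = A n := by
    intro N
    have hU : {g : ℕ → Bool | ∀ n ≤ N, g n = A n} ∈ nhds A := by
      have hEq : {g : ℕ → Bool | ∀ n ≤ N, g n = A n} =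
          ⋂ n ∈ Finset.range (N + 1), {g : ℕ → Bool | g n = A n} := by
        ext g
        simp [Nat.lt_succ_iff]
      rw [hEq]
      refine (Filter.biInter_finset_mem _).2 fun n _ => ?_
      have hop : IsOpen ((fun g : ℕ → Bool => g n) ⁻¹' {A n}) :=
        (isOpen_discrete _).preimage (continuous_apply n)
      exact hop.mem_nhds rfl
    obtain ⟨B, hBU, hBMT⟩ := mem_closure_iff_nhds.1 hA _ hU
    exact ⟨B, hBMT, hBU⟩
  by_cases hfin : {n | A n = true}.Finite
  · obtain ⟨N, hN⟩ := hfin.bddAbove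
    obtain ⟨B, hBmem, hagree⟩ := happrox N
    obtain ⟨ν, hν, hsums⟩ := key_lemma hT hBmem N
    refine Or.inl ⟨ν, hν, ?_⟩
    funext n
    apply bool_ext
    rw [setToBool_eq_true, hsums]
    simp only [Set.mem_setOf_eq]
    constructor
    · rintro ⟨hnN, hBn⟩
      rw [← hagree n hnN]
      exact hBn
    · intro hAn
      have hnN : n ≤ N := hN hAn
      exact ⟨hnN, by rw [hagree n hnN]; exact hAn⟩
  · set P : ℕ → Prop := fun n => A n = true with hPdef
    have hPinf : (setOf P).Infinite := hfin
    have hmono : StrictMono (Nat.nth P) := Nat.nth_strictMono hPinf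
    have hA0 : ¬ P 0 := by
      obtain ⟨B, hBmem, hagree⟩ := happrox 0
      intro h
      have h2 := hagree 0 le_rfl
      rw [MT_zero hBmem] at h2
      have h3 : A 0 = true := h
      rw [← h2] at h3
      exact Bool.false_ne_true h3
    have hpos0 : 0 < Nat.nth P 0 := by
      rcases Nat.eq_zero_or_pos (Nat.nth P 0) with h | h
      · exact absurd (h ▸ Nat.nth_mem_of_infinite hPinf 0) hA0
      · exact h
    set σ : ℕ → ℕ+ := fun k =>
      match k with
      | 0 => ⟨Nat.nth P 0, hpos0⟩
      | (j + 1) => ⟨Nat.nth P (j + 1) - Nat.nth P j, by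
          have := hmono (show j < j + 1 by omega); omega⟩ with hσdef
    have hTEL : ∀ k, ∑ i ∈ Finset.range (k + 1), (σ i : ℕ) = Nat.nth P k := by
      intro k
      induction k with
      | zero => simp [hσdef]
      | succ j ih =>
        rw [Finset.sum_range_succ, ih]
        have := hmono (show j < j + 1 by omega)
        show Nat.nth P j + (Nat.nth P (j + 1) - Nat.nth P j) = Nat.nth P (j + 1)
        omega
    have hofFn : ∀ K, 4 ≤ K → (List.ofFn fun i : Fin K => σ i) ∈ T := by
      intro K hK4
      set N := Nat.nth P (K - 1) with hNdef
      obtain ⟨B, hBmem, hagree⟩ := happrox N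
      obtain ⟨ν, hν, hsums⟩ := key_lemma hT hBmem N
      have hE : {s | s ≤ N ∧ B s = true} = partialSums (List.ofFn fun i : Fin K => σ i) := by
        ext s
        simp only [Set.mem_setOf_eq]
        constructor
        · rintro ⟨hsN, hBs⟩
          have hPs : P s := by
            show A s = true
            rw [← hagree s hsN]
            exact hBs
          have hseq : Nat.nth P (Nat.count P s) = s := Nat.nth_count hPs
          have hjK : Nat.count P s < K := by
            by_contra hcon
            push_neg at hcon
            have : Nat.nth P (K - 1) < Nat.nth P (Nat.count P s) :=
              hmono (by omega)
            omega
          refine mem_partialSums.2 ⟨Nat.count P s, by simpa using hjK, ?_⟩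
          rw [sumTo_ofFn σ (by omega), hTEL, hseq]
        · intro hs
          obtain ⟨j, hj, rfl⟩ := mem_partialSums.1 hs
          simp only [List.length_ofFn] at hj
          rw [sumTo_ofFn σ (by omega), hTEL]
          have h1 : Nat.nth P j ≤ N := by
            rw [hNdef]
            exact hmono.monotone (by omega)
          have h2 : P (Nat.nth P j) := Nat.nth_mem_of_infinite hPinf j
          exact ⟨h1, by rw [hagree _ h1]; exact h2⟩
      have hνeq : ν = List.ofFn fun i : Fin K => σ i :=
        partialSums_injective _ _ (by rw [hsums, hE])
      rcases hν with hν | hν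
      · rwa [← hνeq]
      · exfalso
        rw [hνeq] at hν
        simp only [List.length_ofFn] at hν
        omega
    have hbranch : σ ∈ branches T := by
      intro k
      have hk4 : k ≤ max k 4 := le_max_left _ _
      have := hofFn (max k 4) (le_max_right _ _)
      have hpre : (List.ofFn fun i : Fin k => σ i) <+:
          (List.ofFn fun i : Fin (max k 4) => σ i) := by
        rw [← take_ofFn_eq hk4]
        exact List.take_prefix _ _
      exact hT _ this _ hpre
    refine Or.inr ⟨σ, hbranch, ?_⟩
    funext n
    apply bool_ext
    rw [setToBool_eq_true]
    constructor
    · rintro ⟨k, rfl⟩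
      rw [hTEL]
      exact Nat.nth_mem_of_infinite hPinf k
    · intro hAn
      exact ⟨Nat.count P n, by rw [hTEL, Nat.nth_count hAn]⟩


/-- For every tree `T` on the positive naturals, `M_T` is a compact subset of `2^ℕ`, and it
contains an infinite set iff `T` is ill-founded (has an infinite branch). -/
theorem stmt13 (T : Set (List ℕ+)) (hT : IsTree T) :
    IsCompact (MT T) ∧
    ((∃ A ∈ MT T, {n : ℕ | A n = true}.Infinite) ↔ (branches T).Nonempty) := by
  classical
  refine ⟨(MT_isClosed T hT).isCompact, ?_, ?_⟩
  · rintro ⟨A, hA, hinf⟩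
    rcases hA with ⟨ν, _, rfl⟩ | ⟨σ, hσ, _⟩
    · exfalso
      have hsub : {n : ℕ | setToBool (partialSums ν) n = true} ⊆
          (fun k => sumTo ν (k + 1)) '' Set.Iio ν.length := by
        intro n hn
        obtain ⟨k, hk, rfl⟩ := mem_partialSums.1 (setToBool_eq_true.1 hn)
        exact ⟨k, hk, rfl⟩
      exact hinf (((Set.finite_Iio _).image _).subset hsub)
    · exact ⟨σ, hσ⟩
  · rintro ⟨σ, hσ⟩
    refine ⟨setToBool (partialSumsInf σ), Or.inr ⟨σ, hσ, rfl⟩, ?_⟩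
    have hEq : {n : ℕ | setToBool (partialSumsInf σ) n = true} =
        Set.range (fun k => ∑ i ∈ Finset.range (k + 1), (σ i : ℕ)) := by
      ext n
      simp only [Set.mem_setOf_eq, setToBool_eq_true, Set.mem_range, partialSumsInf]
      exact ⟨fun ⟨k, h⟩ => ⟨k, h.symm⟩, fun ⟨k, h⟩ => ⟨k, h.symm⟩⟩
    rw [hEq]
    apply Set.infinite_range_of_injective
    have hsm : StrictMono (fun k => ∑ i ∈ Finset.range (k + 1), (σ i : ℕ)) := by
      apply strictMono_nat_of_lt_succ
      intro k
      conv_rhs => rw [Finset.sum_range_succ]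
      have := (σ (k + 1)).pos
      omega
    exact hsm.injective
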